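/- If F is a forest on n vertices, then F has a k-sparse set of size at least ⌈(k+1)n/(k+2)⌉. -/

import Mathlib

open SimpleGraph

/-- A set `S` of vertices is `k`-sparse in `G` if every vertex of `S` has at most `k`
neighbors inside `S`. -/
def KSparse {V : Type*} (G : SimpleGraph V) (k : ℕ) (S : Set V) : Prop :=
  ∀ v ∈ S, ({u ∈ S | G.Adj v u}).ncard ≤ k

/-- A set is `k`-dense in `G` if it is `k`-sparse in the complement of `G`. -/
def KDense {V : Type*} (G : SimpleGraph V) (k : ℕ) (S : Set V) : Prop :=
  KSparse Gᶜ k S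

/-- `G` has a `k`-dense set of size `i`. -/
def HasKDense {V : Type*} (G : SimpleGraph V) (k i : ℕ) : Prop :=
  ∃ D : Set V, D.ncard = i ∧ KDense G k D

/-- `G` has a `k`-sparse set of size `j`. -/
def HasKSparse {V : Type*} (G : SimpleGraph V) (k j : ℕ) : Prop :=
  ∃ S : Set V, S.ncard = j ∧ KSparse G k S

/-- A cactus: every edge lies on at most one cycle, i.e. any two cycles sharing
an edge have the same edge set. -/
def IsCactus {V : Type*} (G : SimpleGraph V) : Prop :=
  ∀ (u v : V) (c₁ : G.Walk u u) (c₂ : G.Walk v v), c₁.IsCycle → c₂.IsCycle →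
    (∃ e, e ∈ c₁.edges ∧ e ∈ c₂.edges) → (∀ e, e ∈ c₁.edges ↔ e ∈ c₂.edges)

/-- A split graph: the vertices partition into a clique and an independent set. -/
def IsSplit {V : Type*} (G : SimpleGraph V) : Prop :=
  ∃ K : Set V, G.IsClique K ∧ Gᶜ.IsClique Kᶜ

/-- A cograph: no induced path on four vertices. -/
def IsCograph {V : Type*} (G : SimpleGraph V) : Prop :=
  ¬ ∃ f : Fin 4 ↪ V, ∀ a b : Fin 4, G.Adj (f a) (f b) ↔ (SimpleGraph.pathGraph 4).Adj a b


section Aux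
variable {V : Type*} [DecidableEq V]

/-- `F` with vertex `v` isolated. -/
private def delV (F : SimpleGraph V) (v : V) : SimpleGraph V where
  Adj a b := F.Adj a b ∧ a ≠ v ∧ b ≠ v
  symm := ⟨fun a b (h : F.Adj a b ∧ a ≠ v ∧ b ≠ v) => (⟨h.1.symm, h.2.2, h.2.1⟩ : F.Adj b a ∧ b ≠ v ∧ a ≠ v)⟩
  loopless := ⟨fun a (h : F.Adj a a ∧ a ≠ v ∧ a ≠ v) => h.1.ne rfl⟩

private lemma delV_le (F : SimpleGraph V) (v : V) : delV F v ≤ F := fun _ _ h => (show F.Adj _ _ ∧ _ from h).1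

private lemma delV_reachable_of_walk {F : SimpleGraph V} {v a b : V}
    (p : F.Walk a b) (hv : v ∉ p.support) : (delV F v).Reachable a b := by
  induction p with
  | nil => exact Reachable.refl _
  | @cons a c b h q ih =>
    rw [Walk.support_cons, List.mem_cons] at hv
    push_neg at hv
    have hc : c ≠ v := fun e => hv.2 (e ▸ q.start_mem_support)
    exact (SimpleGraph.Adj.reachable
      (show (delV F v).Adj a c from (⟨h, fun e => hv.1 e.symm, hc⟩ : F.Adj a c ∧ a ≠ v ∧ c ≠ v))).trans (ih hv.2)

private lemma delV_support_ne {F : SimpleGraph V} {v : V} :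
    ∀ {a b : V} (p : (delV F v).Walk a b), a ≠ v → ∀ x ∈ p.support, x ≠ v := by
  intro a b p
  induction p with
  | nil =>
    intro ha x hx
    rw [Walk.support_nil, List.mem_singleton] at hx
    exact hx ▸ ha
  | cons h q ih =>
    intro ha x hx
    rw [Walk.support_cons, List.mem_cons] at hx
    rcases hx with rfl | hx
    · exact ha
    · exact ih (show F.Adj _ _ ∧ _ ∧ _ from h).2.2 x hx

private lemma delV_ne_of_reachable {F : SimpleGraph V} {v a b : V}
    (h : (delV F v).Reachable a b) (ha : a ≠ v) : b ≠ v := by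
  obtain ⟨p⟩ := h
  exact delV_support_ne p ha b p.end_mem_support

private lemma support_mapLe' {G G' : SimpleGraph V} (h : G ≤ G') {a b : V}
    (p : G.Walk a b) : (p.mapLe h).support = p.support := by
  induction p with
  | nil => rfl
  | cons hadj q ih => simp [Walk.mapLe] at ih ⊢

private lemma exists_path_avoid {F : SimpleGraph V} {v a b : V}
    (h : (delV F v).Reachable a b) (ha : a ≠ v) :
    ∃ p : F.Walk a b, p.IsPath ∧ v ∉ p.support := by
  obtain ⟨q⟩ := h
  have hsup := delV_support_ne q ha
  let q' : F.Walk a b := q.mapLe (delV_le F v)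
  have hsup' : v ∉ q'.support := by
    intro hmem
    have : q'.support = q.support := by
      exact support_mapLe' (delV_le F v) q
    rw [this] at hmem
    exact hsup v hmem rfl
  exact ⟨q'.toPath, q'.toPath.2, fun hmem => hsup' (Walk.support_toPath_subset _ hmem)⟩

private lemma delV_eq_of_adj {F : SimpleGraph V} (hF : F.IsAcyclic) {v y₁ y₂ : V}
    (h1 : F.Adj v y₁) (h2 : F.Adj v y₂) (hr : (delV F v).Reachable y₁ y₂) : y₁ = y₂ := by
  obtain ⟨p, hp, hvp⟩ := exists_path_avoid hr h1.ne'
  have hP1 : (Walk.cons h1 p).IsPath := hp.cons hvp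
  have heq := hF.path_unique ⟨Walk.cons h1 p, hP1⟩ (Path.singleton h2)
  have hsup : (Walk.cons h1 p).support = (Walk.cons h2 Walk.nil).support :=
    congrArg (fun q : F.Path v y₂ => (q : F.Walk v y₂).support) heq
  rw [Walk.support_cons, Walk.support_cons, Walk.support_nil] at hsup
  have : p.support = [y₂] := by injection hsup
  have h3 : y₁ ∈ ([y₂] : List V) := this ▸ p.start_mem_support
  simpa using h3

private lemma exists_first_step {F : SimpleGraph V} {v u : V}
    (hr : F.Reachable v u) (hne : v ≠ u) :
    ∃ y, F.Adj v y ∧ (delV F v).Reachable y u := by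
  obtain ⟨q⟩ := hr
  have hp : (q.toPath : F.Walk v u).IsPath := q.toPath.2
  set p : F.Walk v u := (q.toPath : F.Walk v u) with hpdef
  clear_value p
  cases p with
  | nil => exact absurd rfl hne
  | cons h q' =>
    rw [Walk.cons_isPath_iff] at hp
    exact ⟨_, h, delV_reachable_of_walk q' hp.2⟩

private lemma dist_lt_of_sep {F : SimpleGraph V} {v u w : V}
    (hru : F.Reachable v u) (hrw : F.Reachable v w) (hwv : w ≠ v)
    (hsep : ∀ p : F.Walk u w, v ∈ p.support) :
    F.dist v u < F.dist u w := by
  have hruw : F.Reachable u w := hru.symm.trans hrw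
  obtain ⟨p, hp⟩ := hruw.exists_walk_length_eq_dist
  have hv := hsep p
  have h1 : F.dist u v ≤ (p.takeUntil v hv).length := dist_le _
  have h2 : F.dist v w ≤ (p.dropUntil v hv).length := dist_le _
  have hlen : (p.takeUntil v hv).length + (p.dropUntil v hv).length = p.length := by
    rw [← Walk.length_append, Walk.take_spec]
  have hpos : 0 < F.dist v w := hrw.pos_dist_of_ne (Ne.symm hwv)
  have hcomm : F.dist v u = F.dist u v := dist_comm
  omega

end Aux

private lemma arith_step (k m w : ℕ) (hw : k + 1 ≤ w) :
    ((k+1) * (m + w + 1) + (k+1)) / (k+2) ≤ w + ((k+1)*m + (k+1)) / (k+2) := by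
  rw [Nat.div_le_iff_le_mul_add_pred (by omega)]
  have h1 := Nat.div_add_mod ((k+1)*m + (k+1)) (k+2)
  have h2 : ((k+1)*m + (k+1)) % (k+2) < k+2 := Nat.mod_lt _ (by omega)
  set q := ((k+1)*m + (k+1)) / (k+2) with hq
  set r := ((k+1)*m + (k+1)) % (k+2) with hr
  have hq1 : (k+1)*m ≤ (k+2)*q := by nlinarith
  have h3 : k + 2 - 1 = k + 1 := rfl
  rw [h3]
  nlinarith [hq1, hw]

universe u

private lemma forest_sparse (k : ℕ) : ∀ (n : ℕ), ∀ (V : Type u) [Finite V] (F : SimpleGraph V),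
    F.IsAcyclic → Nat.card V ≤ n →
    ∃ S : Set V, KSparse F k S ∧ ((k+1) * Nat.card V + (k+1)) / (k+2) ≤ S.ncard := by
  intro n
  induction n with
  | zero =>
    intro V _ F hF hcard
    refine ⟨∅, fun v hv => absurd hv (Set.notMem_empty v), ?_⟩
    have h0 : Nat.card V = 0 := Nat.le_zero.mp hcard
    rw [h0, Set.ncard_empty]
    have h1 : (k+1) * 0 + (k+1) = k + 1 := by ring
    rw [h1, Nat.div_eq_of_lt (by omega)]
  | succ n ih =>
    intro V _ F hF hcard
    haveI : DecidableEq V := Classical.decEq V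
    by_cases hdeg : ∀ v : V, (F.neighborSet v).ncard ≤ k
    · refine ⟨Set.univ, ?_, ?_⟩
      · intro v _
        have heq : {u ∈ (Set.univ : Set V) | F.Adj v u} = F.neighborSet v := by
          ext u; simp [SimpleGraph.neighborSet]
        rw [heq]; exact hdeg v
      · rw [Set.ncard_univ]
        calc ((k+1) * Nat.card V + (k+1)) / (k+2)
            ≤ ((k+2) * Nat.card V + (k+1)) / (k+2) :=
              Nat.div_le_div_right (by nlinarith)
          _ = Nat.card V + (k+1)/(k+2) := Nat.mul_add_div (by omega) _ _
          _ = Nat.card V := by rw [Nat.div_eq_of_lt (by omega), add_zero]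
    · push_neg at hdeg
      obtain ⟨v₀, hv₀⟩ := hdeg
      set D : Set V := {w : V | k + 1 ≤ (F.neighborSet w).ncard} with hDdef
      have hv₀D : v₀ ∈ D := by simp only [hDdef, Set.mem_setOf_eq]; omega
      obtain ⟨⟨v, u⟩, hvu, hmax'⟩ := Set.Finite.exists_maximalFor
        (fun p : V × V => F.dist p.1 p.2) (D ×ˢ D) (Set.toFinite _) ⟨(v₀, v₀), ⟨hv₀D, hv₀D⟩⟩
      have hvD : v ∈ D := hvu.1
      have huD : u ∈ D := hvu.2
      have hmax : ∀ a b : V, a ∈ D → b ∈ D → F.dist a b ≤ F.dist v u := by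
        intro a b ha hb
        rcases le_total (F.dist a b) (F.dist v u) with h | h
        · exact h
        · exact hmax' (j := (a, b)) ⟨ha, hb⟩ h
      set H := delV F v with hHdef
      set N := F.neighborSet v with hNdef
      set BadN : Set V := {y ∈ N | ∃ w ∈ D, H.Reachable y w} with hBdef
      set Good : Set V := {y ∈ N | ¬ ∃ w ∈ D, H.Reachable y w} with hGdef
      have hBsub : BadN.Subsingleton := by
        intro y₁ hy₁ y₂ hy₂
        by_contra hne
        obtain ⟨hy₁N, w₁, hw₁D, hr₁⟩ := hy₁
        obtain ⟨hy₂N, w₂, hw₂D, hr₂⟩ := hy₂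
        have hadj₁ : F.Adj v y₁ := hy₁N
        have hadj₂ : F.Adj v y₂ := hy₂N
        have hw₁v : w₁ ≠ v := delV_ne_of_reachable hr₁ hadj₁.ne'
        have hrw₁ : F.Reachable v w₁ := hadj₁.reachable.trans (hr₁.mono (delV_le F v))
        have hpos : 0 < F.dist v w₁ := hrw₁.pos_dist_of_ne (Ne.symm hw₁v)
        have hposu : 0 < F.dist v u := lt_of_lt_of_le hpos (hmax v w₁ hvD hw₁D)
        have huv : v ≠ u ∧ F.Reachable v u :=
          dist_ne_zero_iff_ne_and_reachable.mp (Nat.pos_iff_ne_zero.mp hposu)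
        obtain ⟨y_u, hyu_adj, hyu_r⟩ := exists_first_step huv.2 huv.1
        obtain ⟨w, y_w, hwD, hyw_adj, hyw_r, hno⟩ :
            ∃ w y_w, w ∈ D ∧ F.Adj v y_w ∧ H.Reachable y_w w ∧ ¬ H.Reachable y_w y_u := by
          by_cases hc : H.Reachable y₁ y_u
          · refine ⟨w₂, y₂, hw₂D, hadj₂, hr₂, fun hc2 => hne ?_⟩
            exact delV_eq_of_adj hF hadj₁ hadj₂ (hc.trans hc2.symm)
          · exact ⟨w₁, y₁, hw₁D, hadj₁, hr₁, hc⟩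
        have hsep : ∀ p : F.Walk u w, v ∈ p.support := by
          intro p
          by_contra hvp
          have hrew : H.Reachable u w := delV_reachable_of_walk p hvp
          exact hno (hyw_r.trans (hrew.symm.trans hyu_r.symm))
        have hwv : w ≠ v := delV_ne_of_reachable hyw_r hyw_adj.ne'
        have hrw : F.Reachable v w := hyw_adj.reachable.trans (hyw_r.mono (delV_le F v))
        have hlt := dist_lt_of_sep huv.2 hrw hwv hsep
        have hle := hmax u w huD hwD
        exact lt_irrefl _ (lt_of_lt_of_le hlt hle)
      set W₀ : Set V := {z : V | ∃ y ∈ Good, H.Reachable y z} with hW₀def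
      have hGoodAdj : ∀ y ∈ Good, F.Adj v y := fun y hy => hy.1
      have hW₀ne : ∀ z ∈ W₀, z ≠ v := by
        rintro z ⟨y, hy, hr⟩
        exact delV_ne_of_reachable hr (hGoodAdj y hy).ne'
      have hvW₀ : v ∉ W₀ := fun h => hW₀ne v h rfl
      have hW₀D : ∀ z ∈ W₀, (F.neighborSet z).ncard ≤ k := by
        rintro z ⟨y, hy, hr⟩
        by_contra hk
        exact hy.2 ⟨z, by simp only [hDdef, Set.mem_setOf_eq]; omega, hr⟩
      have hW₀cl : ∀ z ∈ W₀, ∀ t, F.Adj z t → t ∈ W₀ ∨ t = v := by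
        rintro z ⟨y, hy, hr⟩ t hadj
        by_cases ht : t = v
        · exact Or.inr ht
        · exact Or.inl ⟨y, hy, hr.trans (SimpleGraph.Adj.reachable
            (show H.Adj z t from (⟨hadj, hW₀ne z ⟨y, hy, hr⟩, ht⟩ : F.Adj z t ∧ z ≠ v ∧ t ≠ v)))⟩
      have hGoodW₀ : Good ⊆ W₀ := fun y hy => ⟨y, hy, Reachable.refl y⟩
      have hNW₀ : N ∩ W₀ = Good := by
        apply Set.Subset.antisymm
        · rintro y' ⟨hy'N, y, hy, hr⟩
          have heq : y = y' := delV_eq_of_adj hF (hGoodAdj y hy) hy'N hr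
          exact heq ▸ hy
        · exact fun y hy => ⟨hy.1, hGoodW₀ hy⟩
      have hNG : N ⊆ Good ∪ BadN := by
        intro y hy
        by_cases h : ∃ w ∈ D, H.Reachable y w
        · exact Or.inr ⟨hy, h⟩
        · exact Or.inl ⟨hy, h⟩
      have hNcard : k + 1 ≤ N.ncard := hvD
      have hBcard : BadN.ncard ≤ 1 := by
        rcases hBsub.eq_empty_or_singleton with h | ⟨a, h⟩
        · rw [h]; simp
        · rw [h]; simp
      have hGoodcard : k ≤ Good.ncard := by
        have h1 : N.ncard ≤ (Good ∪ BadN).ncard :=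
          Set.ncard_le_ncard hNG (Set.toFinite _)
        have h2 := Set.ncard_union_le Good BadN
        omega
      obtain ⟨x, W, hxW, hWcard, hWsp, hWcl⟩ :
          ∃ (x : V) (W : Set V), x ∉ W ∧ k + 1 ≤ W.ncard ∧
            (∀ z ∈ W, {t ∈ W | F.Adj z t}.ncard ≤ k) ∧
            (∀ z ∈ W, ∀ t, F.Adj z t → t ∈ W ∨ t = x) := by
        by_cases hbig : k + 1 ≤ Good.ncard
        · refine ⟨v, W₀, hvW₀,
            le_trans hbig (Set.ncard_le_ncard hGoodW₀ (Set.toFinite _)), ?_, hW₀cl⟩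
          intro z hz
          refine le_trans (Set.ncard_le_ncard ?_ (Set.toFinite _)) (hW₀D z hz)
          rintro t ⟨_, hadj⟩
          exact hadj
        · have hBne : BadN.Nonempty := by
            rcases Set.eq_empty_or_nonempty BadN with h | h
            · exfalso
              have hsub : N ⊆ Good := by rw [h] at hNG; simpa using hNG
              have := Set.ncard_le_ncard hsub (Set.toFinite _)
              omega
            · exact h
          obtain ⟨p, hp⟩ := hBne
          have hpN : F.Adj v p := hp.1
          have hpW₀ : p ∉ W₀ := by
            intro hmem
            have hpG : p ∈ Good := hNW₀ ▸ (⟨hp.1, hmem⟩ : p ∈ N ∩ W₀)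
            exact hpG.2 hp.2
          refine ⟨p, insert v W₀, ?_, ?_, ?_, ?_⟩
          · intro h
            rcases Set.mem_insert_iff.mp h with h | h
            · exact hpN.ne' h
            · exact hpW₀ h
          · rw [Set.ncard_insert_of_notMem hvW₀ (Set.toFinite _)]
            have := Set.ncard_le_ncard hGoodW₀ (Set.toFinite _)
            omega
          · intro z hz
            rcases Set.mem_insert_iff.mp hz with rfl | hz
            · have heq : {t ∈ insert z W₀ | F.Adj z t} = Good := by
                rw [← hNW₀]
                ext t
                simp only [Set.mem_setOf_eq, Set.mem_insert_iff, Set.mem_inter_iff]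
                constructor
                · rintro ⟨rfl | ht, hadj⟩
                  · exact absurd hadj (F.loopless.irrefl t)
                  · exact ⟨hadj, ht⟩
                · rintro ⟨hadj, ht⟩; exact ⟨Or.inr ht, hadj⟩
              rw [heq]; omega
            · refine le_trans (Set.ncard_le_ncard ?_ (Set.toFinite _)) (hW₀D z hz)
              rintro t ⟨_, hadj⟩
              exact hadj
          · intro z hz t hadj
            rcases Set.mem_insert_iff.mp hz with rfl | hz
            · have htN : t ∈ N := hadj
              rcases hNG htN with h | h
              · exact Or.inl (Set.mem_insert_of_mem _ (hGoodW₀ h))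
              · exact Or.inr (hBsub h hp)
            · rcases hW₀cl z hz t hadj with h | h
              · exact Or.inl (Set.mem_insert_of_mem _ h)
              · exact Or.inl (h ▸ Set.mem_insert _ _)
      -- recursion on the rest
      set A : Set V := {z : V | z ∉ W ∧ z ≠ x} with hAdef
      have hAcompl : A = (insert x W)ᶜ := by
        ext z
        simp only [hAdef, Set.mem_setOf_eq, Set.mem_compl_iff, Set.mem_insert_iff, not_or]
        tauto
      have hWx : (insert x W).ncard = W.ncard + 1 :=
        Set.ncard_insert_of_notMem hxW (Set.toFinite _)
      have hsum : (insert x W).ncard + (insert x W)ᶜ.ncard = Nat.card V := by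
        rw [← Set.ncard_union_eq disjoint_compl_right (Set.toFinite _) (Set.toFinite _),
          Set.union_compl_self, Set.ncard_univ]
      have hcardA : Nat.card ↥A = Nat.card V - (W.ncard + 1) := by
        rw [Nat.card_coe_set_eq, hAcompl]
        omega
      have hWV : W.ncard + 1 ≤ Nat.card V := by omega
      have hcardA' : Nat.card ↥A ≤ n := by omega
      have hFA : (SimpleGraph.induce A F).IsAcyclic := by
        intro a c hc
        let f : (SimpleGraph.induce A F) ↪g F := SimpleGraph.Embedding.induce A
        have hinj : Function.Injective (f.toHom : ↥A → V) := Subtype.val_injective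
        exact hF (c.map f.toHom) ((Walk.map_isCycle_iff_of_injective hinj).mpr hc)
      obtain ⟨S', hS'sp, hS'card⟩ := ih ↥A (SimpleGraph.induce A F) hFA hcardA'
      set S : Set V := W ∪ (Subtype.val '' S') with hSdef
      have hSA : ∀ t ∈ Subtype.val '' S', t ∉ W ∧ t ≠ x := by
        rintro t ⟨t', _, rfl⟩; exact t'.2
      have hxS : x ∉ S := by
        rintro (h | h)
        · exact hxW h
        · exact (hSA x h).2 rfl
      refine ⟨S, ?_, ?_⟩
      · intro z hz
        rcases hz with hzW | hzS'
        · refine le_trans (Set.ncard_le_ncard ?_ (Set.toFinite _)) (hWsp z hzW)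
          rintro t ⟨htS, hadj⟩
          rcases hWcl z hzW t hadj with h | rfl
          · exact ⟨h, hadj⟩
          · exact absurd htS hxS
        · obtain ⟨z', hz', rfl⟩ := hzS'
          have hsub : {t ∈ S | F.Adj (↑z') t} ⊆
              Subtype.val '' {t' ∈ S' | (SimpleGraph.induce A F).Adj z' t'} := by
            rintro t ⟨htS, hadj⟩
            rcases htS with htW | ⟨t', ht', rfl⟩
            · exfalso
              rcases hWcl t htW _ hadj.symm with h | h
              · exact z'.2.1 h
              · exact z'.2.2 h
            · exact ⟨t', ⟨ht', hadj⟩, rfl⟩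
          calc {t ∈ S | F.Adj (↑z') t}.ncard
              ≤ (Subtype.val '' {t' ∈ S' | (SimpleGraph.induce A F).Adj z' t'}).ncard :=
                Set.ncard_le_ncard hsub (Set.toFinite _)
            _ = {t' ∈ S' | (SimpleGraph.induce A F).Adj z' t'}.ncard :=
                Set.ncard_image_of_injective _ Subtype.val_injective
            _ ≤ k := hS'sp z' hz'
      · have hdisj : Disjoint W (Subtype.val '' S') := by
          rw [Set.disjoint_right]
          intro t ht
          exact (hSA t ht).1
        have hScard : S.ncard = W.ncard + S'.ncard := by
          rw [hSdef, Set.ncard_union_eq hdisj (Set.toFinite _) (Set.toFinite _),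
            Set.ncard_image_of_injective _ Subtype.val_injective]
        rw [hScard]
        have hVeq : Nat.card V = Nat.card ↥A + W.ncard + 1 := by omega
        calc ((k+1) * Nat.card V + (k+1)) / (k+2)
            = ((k+1) * (Nat.card ↥A + W.ncard + 1) + (k+1)) / (k+2) := by rw [← hVeq]
          _ ≤ W.ncard + ((k+1) * Nat.card ↥A + (k+1)) / (k+2) := arith_step k _ _ hWcard
          _ ≤ W.ncard + S'.ncard := Nat.add_le_add_left hS'card _


theorem stmt3 {V : Type*} [Fintype V] (F : SimpleGraph V) (k : ℕ)
    (hforest : F.IsAcyclic) :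
    ∃ S : Set V, KSparse F k S ∧
      ((k + 1) * Fintype.card V + (k + 1)) / (k + 2) ≤ S.ncard := by
  obtain ⟨S, h1, h2⟩ := forest_sparse k (Fintype.card V) V F hforest
    (le_of_eq Nat.card_eq_fintype_card)
  rw [Nat.card_eq_fintype_card] at h2
  exact ⟨S, h1, h2⟩
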